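/- arXiv:2105.13322 — 2 statements merged into one kernel-verified Lean document; each statement's English description precedes it below -/
import Mathlib

section
/- Let G be a finite nilpotent group of order p_1^{α_1} p_2^{α_2} with primes p_1 < p_2, whose Sylow p_1-subgroup P_1 is noncyclic and whose Sylow p_2-subgroup P_2 is cyclic. If ⟨y⟩ is a maximal cyclic subgroup of G with Sylow decomposition y = y_1 y_2 (y_i ∈ P_i), then deg(y) < deg(y_2) in the power graph P(G). -/
/-- The power graph of a group: distinct `x` and `y` are adjacent iff one is a
positive power of the other. -/
def powerGraph (G : Type*) [Group G] : SimpleGraph G where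
  Adj x y := x ≠ y ∧ ((∃ k : ℕ, 0 < k ∧ x = y ^ k) ∨ (∃ k : ℕ, 0 < k ∧ y = x ^ k))
  symm := by
    constructor
    intro x y h
    exact ⟨h.1.symm, h.2.symm⟩
  loopless := by
    constructor
    intro x h
    exact h.1 rfl

noncomputable instance powerGraphDecidableAdj (G : Type*) [Group G] :
    DecidableRel (powerGraph G).Adj :=
  Classical.decRel _

/-- The vertex connectivity of a finite graph: the minimum number of vertices whose
deletion yields a disconnected graph or a graph with exactly one vertex. -/
noncomputable def vertexConnectivity {V : Type*} [Fintype V] (Γ : SimpleGraph V) : ℕ :=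
  sInf {n | ∃ S : Finset V, S.card = n ∧
    (¬ (SimpleGraph.induce ((↑S : Set V)ᶜ) Γ).Preconnected ∨ ((↑S : Set V)ᶜ).ncard = 1)}

/-- A subgroup is a maximal cyclic subgroup if it is cyclic and not properly contained
in any cyclic subgroup. -/
def IsMaximalCyclic {G : Type*} [Group G] (M : Subgroup G) : Prop :=
  IsCyclic ↥M ∧ ∀ N : Subgroup G, IsCyclic ↥N → M ≤ N → M = N

/-- `K` is a maximal cyclic subgroup of the subgroup `H`. -/
def IsMaximalCyclicIn {G : Type*} [Group G] (H K : Subgroup G) : Prop :=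
  IsCyclic ↥K ∧ K ≤ H ∧ ∀ N : Subgroup G, IsCyclic ↥N → N ≤ H → K ≤ N → K = N

/-- A generalized quaternion group: a dicyclic group `Q_{4n}` with `n ≥ 2` a power of 2. -/
def IsGeneralizedQuaternion (G : Type*) [Group G] : Prop :=
  ∃ n : ℕ, 2 ≤ n ∧ (∃ k : ℕ, n = 2 ^ k) ∧ Nonempty (G ≃* QuaternionGroup n)

open Finset

lemma aux_isCyclic_zpowers {G : Type*} [Group G] (u : G) : IsCyclic ↥(Subgroup.zpowers u) := by
  refine ⟨⟨⟨u, Subgroup.mem_zpowers u⟩, fun x => ?_⟩⟩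
  obtain ⟨k, hk⟩ := x.2
  exact ⟨k, Subtype.ext (by simpa using hk)⟩

lemma aux_mem_zpowers_of_orderOf_dvd {H : Type*} [Group H] [Fintype H] [DecidableEq H]
    [IsCyclic H] (a b : H) (h : orderOf a ∣ orderOf b) : a ∈ Subgroup.zpowers b := by
  have hb : 0 < orderOf b := orderOf_pos b
  set S : Finset H := Finset.univ.filter (fun x => x ^ orderOf b = 1) with hS
  have hcardS : S.card ≤ orderOf b := IsCyclic.card_pow_eq_one_le hb
  set T : Finset H := Finset.univ.filter (fun x => x ∈ Subgroup.zpowers b) with hT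
  have hTS : T ⊆ S := by
    intro x hx
    simp only [hT, Finset.mem_filter, Finset.mem_univ, true_and] at hx
    simp only [hS, Finset.mem_filter, Finset.mem_univ, true_and]
    obtain ⟨k, hk⟩ := hx
    have : (b ^ orderOf b) = 1 := pow_orderOf_eq_one b
    rw [← hk, ← zpow_natCast, ← zpow_mul, mul_comm, zpow_mul, zpow_natCast, this, one_zpow]
  have hcardT : T.card = orderOf b := by
    rw [hT]
    rw [← Fintype.card_subtype]
    rw [← Nat.card_eq_fintype_card]
    exact Nat.card_zpowers b
  have hST : T = S := Finset.eq_of_subset_of_card_le hTS (by omega)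
  have ha : a ∈ S := by
    simp only [hS, Finset.mem_filter, Finset.mem_univ, true_and]
    exact orderOf_dvd_iff_pow_eq_one.mp h
  rw [← hST] at ha
  simp only [hT, Finset.mem_filter] at ha
  exact ha.2

lemma aux_pow_mul_eq {G : Type*} [Group G] [Finite G] (z w : G) (hc : Commute z w)
    (hco : Nat.Coprime (orderOf z) (orderOf w)) : ∃ k : ℕ, 0 < k ∧ (z * w) ^ k = w := by
  obtain ⟨k₀, hk₀1, hk₀2⟩ := Nat.chineseRemainder hco 0 1
  have h1 : 0 < orderOf z := orderOf_pos z
  have h2 : 0 < orderOf w := orderOf_pos w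
  refine ⟨k₀ + orderOf z * orderOf w, by positivity, ?_⟩
  rw [hc.mul_pow]
  have hz : z ^ (k₀ + orderOf z * orderOf w) = 1 := by
    apply orderOf_dvd_iff_pow_eq_one.mp
    have : (orderOf z : ℕ) ∣ k₀ := (Nat.modEq_zero_iff_dvd).mp hk₀1
    exact Nat.dvd_add this (Dvd.intro _ rfl)
  have hw : w ^ (k₀ + orderOf z * orderOf w) = w ^ 1 := by
    rw [pow_eq_pow_iff_modEq]
    calc k₀ + orderOf z * orderOf w ≡ k₀ + 0 [MOD orderOf w] :=
          Nat.ModEq.add_left k₀ (Nat.modEq_zero_iff_dvd.mpr ⟨orderOf z, mul_comm _ _⟩)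
      _ ≡ 1 [MOD orderOf w] := by simpa using hk₀2
  rw [hz, hw, one_mul, pow_one]

lemma aux_sylow_normal {G : Type*} [Group G] [Fintype G] (hnil : Group.IsNilpotent G)
    (p α : ℕ) [hp : Fact p.Prime] (P : Subgroup G) (hc : Nat.card P = p ^ α)
    (hnd : ¬ p ^ (α + 1) ∣ Fintype.card G) : P.Normal := by
  have hPp : IsPGroup p P := IsPGroup.of_card hc
  obtain ⟨Q, hPQ⟩ := hPp.exists_le_sylow
  have htfae := (isNilpotent_of_finite_tfae (G := G)).out 0 3
  have hQn : (Q : Subgroup G).Normal := htfae.mp hnil p hp Q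
  obtain ⟨β, hβ⟩ := Q.isPGroup'.exists_card_eq
  have hdvd : Nat.card (Q : Subgroup G) ∣ Fintype.card G := by
    rw [← Nat.card_eq_fintype_card]; exact Subgroup.card_subgroup_dvd_card _
  have hβα : β ≤ α := by
    by_contra hβα
    exact hnd (dvd_trans (pow_dvd_pow p (by omega)) (hβ ▸ hdvd))
  have hPQeq : P = Q := Subgroup.eq_of_le_of_card_ge hPQ
    (by rw [hβ, hc]; exact Nat.pow_le_pow_right hp.out.pos hβα)
  rw [hPQeq]; exact hQn

/-- If `⟨y⟩` is a maximal cyclic subgroup of `G` with Sylow decomposition `y = y₁ y₂`,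
where `P₁` is noncyclic and `P₂` is cyclic, then `deg(y) < deg(y₂)`. -/
theorem degree_lt_degree_second_component
    {G : Type*} [Group G] [Fintype G] (hnil : Group.IsNilpotent G)
    (p₁ p₂ α₁ α₂ : ℕ) (hp₁ : p₁.Prime) (hp₂ : p₂.Prime) (hlt : p₁ < p₂)
    (hα₁ : 1 ≤ α₁) (hα₂ : 1 ≤ α₂)
    (P₁ P₂ : Subgroup G)
    (hcard : Fintype.card G = p₁ ^ α₁ * p₂ ^ α₂)
    (hP₁ : Nat.card ↥P₁ = p₁ ^ α₁) (hP₂ : Nat.card ↥P₂ = p₂ ^ α₂)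
    (hP₁nc : ¬ IsCyclic ↥P₁) (hP₂c : IsCyclic ↥P₂)
    (y y₁ y₂ : G) (hy₁ : y₁ ∈ P₁) (hy₂ : y₂ ∈ P₂) (hy : y = y₁ * y₂)
    (hmax : IsMaximalCyclic (Subgroup.zpowers y)) :
    (powerGraph G).degree y < (powerGraph G).degree y₂ := by
  classical
  haveI : Fact p₁.Prime := ⟨hp₁⟩
  haveI : Fact p₂.Prime := ⟨hp₂⟩
  have hp₁₂ : p₁ ≠ p₂ := hlt.ne
  have hp₁2 : 2 ≤ p₁ := hp₁.two_le
  have hp₂3 : 3 ≤ p₂ := by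
    rcases hp₂.eq_one_or_self_of_dvd 1 (by norm_num) with h | h <;> omega
  have hcop : Nat.Coprime (p₁ ^ α₁) (p₂ ^ α₂) :=
    Nat.Coprime.pow α₁ α₂ ((Nat.coprime_primes hp₁ hp₂).mpr hp₁₂)
  -- orders of elements of P₁ / P₂
  have horder₁ : ∀ x ∈ P₁, orderOf x ∣ p₁ ^ α₁ := by
    intro x hx
    rw [← hP₁]
    exact Subgroup.orderOf_dvd_natCard P₁ hx
  have horder₂ : ∀ x ∈ P₂, orderOf x ∣ p₂ ^ α₂ := by
    intro x hx
    rw [← hP₂]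
    exact Subgroup.orderOf_dvd_natCard P₂ hx
  -- normality
  have hP₁norm : P₁.Normal := by
    refine aux_sylow_normal hnil p₁ α₁ P₁ hP₁ ?_
    rw [hcard]
    intro hdvd
    have hco : (p₁ ^ (α₁ + 1)).Coprime (p₂ ^ α₂) :=
      Nat.Coprime.pow _ _ ((Nat.coprime_primes hp₁ hp₂).mpr hp₁₂)
    have := hco.dvd_of_dvd_mul_right hdvd
    have := (Nat.pow_dvd_pow_iff_le_right (by omega : 1 < p₁)).mp this
    omega
  have hP₂norm : P₂.Normal := by
    refine aux_sylow_normal hnil p₂ α₂ P₂ hP₂ ?_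
    rw [hcard]
    intro hdvd
    have hco : (p₂ ^ (α₂ + 1)).Coprime (p₁ ^ α₁) :=
      Nat.Coprime.pow _ _ ((Nat.coprime_primes hp₂ hp₁).mpr hp₁₂.symm)
    have := hco.dvd_of_dvd_mul_left hdvd
    have := (Nat.pow_dvd_pow_iff_le_right (by omega : 1 < p₂)).mp this
    omega
  -- disjointness
  have hdisj : Disjoint P₁ P₂ := by
    rw [Subgroup.disjoint_def]
    intro x hx1 hx2
    have h1 := horder₁ x hx1
    have h2 := horder₂ x hx2
    have : orderOf x ∣ Nat.gcd (p₁ ^ α₁) (p₂ ^ α₂) := Nat.dvd_gcd h1 h2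
    rw [Nat.Coprime] at hcop
    rw [hcop, Nat.dvd_one] at this
    exact orderOf_eq_one_iff.mp this
  have hcomm : ∀ z ∈ P₁, ∀ w ∈ P₂, Commute z w := fun z hz w hw =>
    Subgroup.commute_of_normal_of_disjoint P₁ P₂ hP₁norm hP₂norm hdisj z w hz hw
  -- order of y₁
  obtain ⟨c, hc, hcy⟩ := (Nat.dvd_prime_pow hp₁).mp (horder₁ y₁ hy₁)
  have hcα : c < α₁ := by
    rcases lt_or_eq_of_le hc with h | h
    · exact h
    · exfalso
      apply hP₁nc
      refine isCyclic_of_orderOf_eq_card (⟨y₁, hy₁⟩ : P₁) ?_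
      rw [Subgroup.orderOf_mk, hP₁, hcy, h]
  have hoy₁ : orderOf y₁ ≤ p₁ ^ (α₁ - 1) := by
    rw [hcy]
    exact Nat.pow_le_pow_right hp₁.pos (by omega)
  -- order of y₂
  obtain ⟨b, hb, hby⟩ := (Nat.dvd_prime_pow hp₂).mp (horder₂ y₂ hy₂)
  -- upper bound on degree of y
  have hdegy : (powerGraph G).degree y + 1 ≤ orderOf y₁ * orderOf y₂ := by
    have hsub : (powerGraph G).neighborFinset y ⊆
        (Finset.univ.filter (· ∈ Subgroup.zpowers y)).erase y := by
      intro u hu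
      rw [SimpleGraph.mem_neighborFinset] at hu
      obtain ⟨hne, hcase⟩ := hu
      rw [Finset.mem_erase]
      refine ⟨fun h => hne h.symm, ?_⟩
      rw [Finset.mem_filter]
      refine ⟨Finset.mem_univ u, ?_⟩
      rcases hcase with ⟨k, hk, hyk⟩ | ⟨k, hk, hyk⟩
      · have hyu : y ∈ Subgroup.zpowers u := hyk ▸ Subgroup.pow_mem _ (Subgroup.mem_zpowers u) k
        have hle : Subgroup.zpowers y ≤ Subgroup.zpowers u := Subgroup.zpowers_le.mpr hyu
        have := hmax.2 (Subgroup.zpowers u) (aux_isCyclic_zpowers u) hle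
        rw [this]
        exact Subgroup.mem_zpowers u
      · exact hyk ▸ Subgroup.pow_mem _ (Subgroup.mem_zpowers y) k
    have hcardf : (Finset.univ.filter (· ∈ Subgroup.zpowers y)).card = orderOf y := by
      rw [← Fintype.card_subtype, ← Nat.card_eq_fintype_card]
      exact Nat.card_zpowers y
    have hymem : y ∈ Finset.univ.filter (· ∈ Subgroup.zpowers y) := by
      simp [Subgroup.mem_zpowers]
    have h1 : (powerGraph G).degree y ≤ orderOf y - 1 := by
      calc (powerGraph G).degree y ≤ ((Finset.univ.filter (· ∈ Subgroup.zpowers y)).erase y).card :=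
            Finset.card_le_card hsub
        _ = orderOf y - 1 := by rw [Finset.card_erase_of_mem hymem, hcardf]
    have h2 : orderOf y ∣ orderOf y₁ * orderOf y₂ := by
      rw [hy]
      exact ((hcomm y₁ hy₁ y₂ hy₂).orderOf_mul_dvd_lcm).trans (Nat.lcm_dvd_mul _ _)
    have h3 : 0 < orderOf y := orderOf_pos y
    have h4 : orderOf y ≤ orderOf y₁ * orderOf y₂ := Nat.le_of_dvd (mul_pos (orderOf_pos y₁) (orderOf_pos y₂)) h2
    omega
  -- case split on y₂ = 1
  by_cases hy₂1 : y₂ = 1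
  · -- trivial second component: y₂ = 1 has full degree
    have hlow : Fintype.card G - 1 ≤ (powerGraph G).degree y₂ := by
      have hsub : Finset.univ.erase y₂ ⊆ (powerGraph G).neighborFinset y₂ := by
        intro u hu
        rw [Finset.mem_erase] at hu
        rw [SimpleGraph.mem_neighborFinset]
        refine ⟨fun h => hu.1 h.symm, Or.inl ⟨Fintype.card G, Fintype.card_pos, ?_⟩⟩
        rw [hy₂1, pow_card_eq_one]
      calc Fintype.card G - 1 = (Finset.univ.erase y₂).card := by
            rw [Finset.card_erase_of_mem (Finset.mem_univ _), Finset.card_univ]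
        _ ≤ _ := Finset.card_le_card hsub
    have hoy₂1 : orderOf y₂ = 1 := by rw [hy₂1, orderOf_one]
    have hup : orderOf y₁ * orderOf y₂ ≤ p₁ ^ (α₁ - 1) := by
      rw [hoy₂1, mul_one]; exact hoy₁
    have h5 : p₁ ^ (α₁ - 1) < Fintype.card G := by
      rw [hcard]
      calc p₁ ^ (α₁ - 1) < p₁ ^ α₁ := Nat.pow_lt_pow_right (by omega) (by omega)
        _ ≤ p₁ ^ α₁ * p₂ ^ α₂ := Nat.le_mul_of_pos_right _ (by positivity)
    omega
  · -- main case : y₂ ≠ 1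
    have hb1 : 1 ≤ b := by
      rcases Nat.eq_zero_or_pos b with h | h
      · exfalso; apply hy₂1
        have : orderOf y₂ = 1 := by rw [hby, h, pow_zero]
        exact orderOf_eq_one_iff.mp this
      · exact h
    set y₂' : ↥P₂ := (⟨y₂, hy₂⟩ : ↥P₂) with hy₂'
    set W : Finset ↥P₂ := Finset.univ.filter (fun w => y₂' ∈ Subgroup.zpowers w) with hW
    set Wc : Finset ↥P₂ := Finset.univ.filter (fun w => ¬ (y₂' ∈ Subgroup.zpowers w)) with hWc
    have hcardP₂ : Fintype.card ↥P₂ = p₂ ^ α₂ := by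
      rw [← Nat.card_eq_fintype_card]; exact hP₂
    have hWcard : p₂ ^ α₂ - p₂ ^ (b - 1) ≤ W.card := by
      have hcompl : Wc ⊆ Finset.univ.filter (fun w : ↥P₂ => w ^ (p₂ ^ (b - 1)) = 1) := by
        intro w hw
        rw [hWc] at hw
        simp only [Finset.mem_filter, Finset.mem_univ, true_and] at hw ⊢
        obtain ⟨d, hd, hdw⟩ := (Nat.dvd_prime_pow hp₂).mp
          (hP₂ ▸ orderOf_dvd_natCard w)
        have hdb : d ≤ b - 1 := by
          by_contra hdb
          apply hw
          apply aux_mem_zpowers_of_orderOf_dvd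
          rw [hy₂', Subgroup.orderOf_mk, hby, hdw]
          exact pow_dvd_pow p₂ (by omega)
        apply orderOf_dvd_iff_pow_eq_one.mp
        rw [hdw]
        exact pow_dvd_pow p₂ hdb
      have h1 : (Finset.univ.filter (fun w : ↥P₂ => w ^ (p₂ ^ (b - 1)) = 1)).card ≤ p₂ ^ (b - 1) :=
        IsCyclic.card_pow_eq_one_le (by positivity)
      have h3 : Wc.card ≤ p₂ ^ (b - 1) := le_trans (Finset.card_le_card hcompl) h1
      have h2 : p₂ ^ α₂ ≤ W.card + Wc.card := by
        rw [← hcardP₂, ← Finset.card_univ]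
        refine le_trans (Finset.card_le_card ?_) (Finset.card_union_le _ _)
        intro x _
        by_cases hx : y₂' ∈ Subgroup.zpowers x
        · exact Finset.mem_union_left _ (by rw [hW]; simp [hx])
        · exact Finset.mem_union_right _ (by rw [hWc]; simp [hx])
      omega
    set F₁ : Finset G := Finset.univ.filter (· ∈ P₁) with hF₁
    have hF₁card : F₁.card = p₁ ^ α₁ := by
      rw [hF₁, ← Fintype.card_subtype, ← Nat.card_eq_fintype_card]; exact hP₁
    set Wg : Finset G := Finset.image (fun w : ↥P₂ => (w : G)) W with hWg
    have hWgcard : Wg.card = W.card := Finset.card_image_of_injective _ Subtype.coe_injective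
    have hWgmem : ∀ u ∈ Wg, u ∈ P₂ ∧ y₂ ∈ Subgroup.zpowers u := by
      intro u hu
      rw [hWg, Finset.mem_image] at hu
      obtain ⟨w, hwW, rfl⟩ := hu
      refine ⟨w.2, ?_⟩
      rw [hW, Finset.mem_filter] at hwW
      obtain ⟨k, hk⟩ := hwW.2
      refine ⟨k, ?_⟩
      have := congrArg (fun x : ↥P₂ => (x : G)) hk
      simpa using this
    set T₀ : Finset G := (F₁ ×ˢ Wg).image (fun p => p.1 * p.2) with hT₀
    have hT₀card : T₀.card = F₁.card * Wg.card := by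
      rw [hT₀, Finset.card_image_of_injOn, Finset.card_product]
      intro a ha b' hb' hab
      simp only [Finset.mem_coe, Finset.mem_product] at ha hb'
      have ha1 : a.1 ∈ P₁ := by
        have := ha.1
        rw [hF₁, Finset.mem_filter] at this
        exact this.2
      have hb'1 : b'.1 ∈ P₁ := by
        have := hb'.1
        rw [hF₁, Finset.mem_filter] at this
        exact this.2
      have ha2 : a.2 ∈ P₂ := (hWgmem _ ha.2).1
      have hb'2 : b'.2 ∈ P₂ := (hWgmem _ hb'.2).1
      simp only at hab
      have key : b'.1⁻¹ * a.1 = b'.2 * a.2⁻¹ := by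
        have := congrArg (fun x => b'.1⁻¹ * x * a.2⁻¹) hab
        simpa [mul_assoc] using this
      have hmem1 : b'.1⁻¹ * a.1 ∈ P₁ := P₁.mul_mem (P₁.inv_mem hb'1) ha1
      have hmem2 : b'.1⁻¹ * a.1 ∈ P₂ := key ▸ P₂.mul_mem hb'2 (P₂.inv_mem ha2)
      have h1 : b'.1⁻¹ * a.1 = 1 := Subgroup.disjoint_def.mp hdisj hmem1 hmem2
      have heq1 : a.1 = b'.1 := by
        have := congrArg (fun x => b'.1 * x) h1
        simpa [mul_assoc] using this
      have heq2 : a.2 = b'.2 := by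
        rw [heq1] at hab
        exact mul_left_cancel hab
      exact Prod.ext heq1 heq2
    have hT₀sub : T₀ ⊆ insert y₂ ((powerGraph G).neighborFinset y₂) := by
      intro u hu
      rw [hT₀, Finset.mem_image] at hu
      obtain ⟨⟨z, w⟩, hzw, rfl⟩ := hu
      rw [Finset.mem_product] at hzw
      have hz : z ∈ P₁ := by
        have := hzw.1
        rw [hF₁, Finset.mem_filter] at this
        exact this.2
      obtain ⟨hwP₂, hy₂w⟩ := hWgmem _ hzw.2
      by_cases he : z * w = y₂
      · rw [he]; exact Finset.mem_insert_self _ _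
      · refine Finset.mem_insert_of_mem ?_
        rw [SimpleGraph.mem_neighborFinset]
        refine ⟨fun h => he h.symm, Or.inl ?_⟩
        have hcozw : Nat.Coprime (orderOf z) (orderOf w) :=
          Nat.Coprime.coprime_dvd_left (horder₁ z hz)
            (Nat.Coprime.coprime_dvd_right (horder₂ w hwP₂) hcop)
        obtain ⟨k, hk, hkw⟩ := aux_pow_mul_eq z w (hcomm z hz w hwP₂) hcozw
        obtain ⟨t, ht⟩ := (Submonoid.mem_powers_iff _ _).mp
          (mem_powers_iff_mem_zpowers.mpr hy₂w)
        have htpos : 0 < t := by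
          rcases Nat.eq_zero_or_pos t with h | h
          · exfalso; apply hy₂1; rw [← ht, h, pow_zero]
          · exact h
        refine ⟨k * t, by positivity, ?_⟩
        rw [pow_mul, hkw, ht]
    have hy₂T₀ : y₂ ∈ T₀ := by
      rw [hT₀, Finset.mem_image]
      refine ⟨(1, y₂), ?_, one_mul y₂⟩
      rw [Finset.mem_product]
      constructor
      · rw [hF₁, Finset.mem_filter]
        exact ⟨Finset.mem_univ _, P₁.one_mem⟩
      · rw [hWg, Finset.mem_image]
        refine ⟨y₂', ?_, rfl⟩
        rw [hW, Finset.mem_filter]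
        exact ⟨Finset.mem_univ _, Subgroup.mem_zpowers _⟩
    have hdeg₂ : p₁ ^ α₁ * (p₂ ^ α₂ - p₂ ^ (b - 1)) ≤ (powerGraph G).degree y₂ + 1 := by
      calc p₁ ^ α₁ * (p₂ ^ α₂ - p₂ ^ (b - 1)) ≤ F₁.card * Wg.card := by
            rw [hF₁card, hWgcard]; exact Nat.mul_le_mul le_rfl hWcard
        _ = T₀.card := hT₀card.symm
        _ ≤ (insert y₂ ((powerGraph G).neighborFinset y₂)).card := Finset.card_le_card hT₀sub
        _ ≤ (powerGraph G).degree y₂ + 1 := Finset.card_insert_le _ _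
    -- final arithmetic
    have hupper : (powerGraph G).degree y + 1 ≤ p₁ ^ (α₁ - 1) * p₂ ^ b := by
      refine hdegy.trans ?_
      rw [hby]
      exact Nat.mul_le_mul hoy₁ le_rfl
    have hkey : p₁ ^ (α₁ - 1) * p₂ ^ b < p₁ ^ α₁ * (p₂ ^ α₂ - p₂ ^ (b - 1)) := by
      have hq : 1 ≤ p₂ ^ (b - 1) := Nat.one_le_pow _ _ (by omega)
      have hr : 1 ≤ p₁ ^ (α₁ - 1) := Nat.one_le_pow _ _ (by omega)
      have hpb : p₂ ^ b = p₂ ^ (b - 1) * p₂ := by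
        rw [← pow_succ]
        congr 1
        omega
      have hpα₁ : p₁ ^ α₁ = p₁ ^ (α₁ - 1) * p₁ := by
        rw [← pow_succ]
        congr 1
        omega
      have hA : p₂ ^ (b - 1) * p₂ ≤ p₂ ^ α₂ := by
        rw [← hpb]
        exact Nat.pow_le_pow_right (by omega) hb
      set q := p₂ ^ (b - 1) with hqdef
      set r := p₁ ^ (α₁ - 1) with hrdef
      have hqA : q ≤ p₂ ^ α₂ := le_trans (Nat.le_mul_of_pos_right q (by omega)) hA
      obtain ⟨D, hD⟩ : ∃ D, p₂ ^ α₂ = D + q := ⟨p₂ ^ α₂ - q, by omega⟩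
      rw [hpb, hpα₁, hD]
      have hsub : D + q - q = D := by omega
      rw [hsub]
      rw [hD] at hA
      have hqX : q * 3 ≤ q * p₂ := Nat.mul_le_mul le_rfl hp₂3
      have h2D : q * p₂ < 2 * D := by omega
      have h2p : 2 * D ≤ p₁ * D := Nat.mul_le_mul hp₁2 le_rfl
      have hX : q * p₂ < p₁ * D := lt_of_lt_of_le h2D h2p
      calc r * (q * p₂) < r * (p₁ * D) := mul_lt_mul_of_pos_left hX (by omega)
        _ = r * p₁ * D := by ring
    omega
end

section
/- Let G be a finite nilpotent group of order p_1^{α_1} p_2^{α_2} with primes p_1 < p_2, whose Sylow p_1-subgroup P_1 is noncyclic and whose Sylow p_2-subgroup P_2 is cyclic. Let ⟨y⟩ be a maximal cyclic subgroup of G with Sylow decomposition y = y_1 y_2 (y_i ∈ P_i). If x ∈ ⟨y⟩ has both Sylow components nonidentity (i.e., both p_1 and p_2 divide o(x)), then deg(x) > deg(y_1) in the power graph P(G); in particular deg(y) > deg(y_1). -/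
set_option linter.unusedSectionVars false


lemma isCyclic_zpowers' {M : Type*} [Group M] (c : M) : IsCyclic ↥(Subgroup.zpowers c) := by
  refine ⟨⟨⟨c, Subgroup.mem_zpowers c⟩, fun x => ?_⟩⟩
  obtain ⟨k, hk⟩ := x.2
  exact ⟨k, Subtype.ext (by simpa using hk)⟩

lemma ncard_prod' {A B : Type*} (s : Set A) (t : Set B) :
    (s ×ˢ t).ncard = s.ncard * t.ncard := by
  rw [← Nat.card_coe_set_eq, ← Nat.card_coe_set_eq, ← Nat.card_coe_set_eq,
    ← Nat.card_prod]
  exact Nat.card_congr (Equiv.Set.prod s t)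

open Subgroup

section Helpers
variable {M : Type*} [Group M] [Finite M]

lemma mem_zpowers_iff_nat {x y : M} : y ∈ zpowers x ↔ ∃ k : ℕ, x ^ k = y := by
  rw [← mem_powers_iff_mem_zpowers, Submonoid.mem_powers_iff]

lemma mem_zpowers_iff_pos {x y : M} : y ∈ zpowers x ↔ ∃ k : ℕ, 0 < k ∧ y = x ^ k := by
  rw [mem_zpowers_iff_nat]
  constructor
  · rintro ⟨k, rfl⟩
    rcases Nat.eq_zero_or_pos k with rfl | hk
    · exact ⟨orderOf x, orderOf_pos x, by simp [pow_orderOf_eq_one]⟩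
    · exact ⟨k, hk, rfl⟩
  · rintro ⟨k, _, rfl⟩
    exact ⟨k, rfl⟩

lemma isCyclic_zpowers (c : M) : IsCyclic ↥(zpowers c) := by
  refine ⟨⟨⟨c, mem_zpowers c⟩, fun x => ?_⟩⟩
  obtain ⟨k, hk⟩ := x.2
  exact ⟨k, Subtype.ext (by simpa using hk)⟩

lemma prod_mem_zpowers_iff {H K : Type*} [Group H] [Group K] [Finite H] [Finite K]
    {c u : H} {d v : K} (hco : Nat.Coprime (orderOf c) (orderOf d)) :
    (u, v) ∈ zpowers (c, d) ↔ u ∈ zpowers c ∧ v ∈ zpowers d := by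
  constructor
  · intro h
    rw [mem_zpowers_iff_nat] at h
    obtain ⟨k, hk⟩ := h
    rw [Prod.pow_mk, Prod.mk.injEq] at hk
    exact ⟨mem_zpowers_iff_nat.2 ⟨k, hk.1⟩, mem_zpowers_iff_nat.2 ⟨k, hk.2⟩⟩
  · rintro ⟨hu, hv⟩
    obtain ⟨m, hm⟩ := mem_zpowers_iff_nat.1 hu
    obtain ⟨n, hn⟩ := mem_zpowers_iff_nat.1 hv
    obtain ⟨k, hk₁, hk₂⟩ := Nat.chineseRemainder hco m n
    refine mem_zpowers_iff_nat.2 ⟨k, ?_⟩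
    rw [Prod.pow_mk, Prod.mk.injEq]
    exact ⟨(pow_eq_pow_iff_modEq.2 hk₁).trans hm, (pow_eq_pow_iff_modEq.2 hk₂).trans hn⟩

end Helpers

open Subgroup Set

set_option linter.unusedSectionVars false

section Count
variable {M : Type*} [Group M] [Finite M]

/-- The set of elements generating the same cyclic subgroup as `c` has at most
`φ(orderOf c)` elements. -/
lemma ncard_gen_le (c : M) :
    {a : M | zpowers a = zpowers c}.ncard ≤ Nat.totient (orderOf c) := by
  classical
  have := Fintype.ofFinite M
  set Z := zpowers c with hZ
  have : IsCyclic ↥Z := isCyclic_zpowers' c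
  have hfin := Fintype.ofFinite ↥Z
  have hcard : Fintype.card ↥Z = orderOf c := by
    rw [← Nat.card_eq_fintype_card, Nat.card_zpowers]
  have key : ({a : ↥Z | orderOf a = orderOf c}).ncard = Nat.totient (orderOf c) := by
    rw [Set.ncard_eq_toFinset_card', Set.toFinset_setOf]
    rw [← hcard]
    exact IsCyclic.card_orderOf_eq_totient (dvd_refl _)
  rw [← key]
  have hsub : {a : M | zpowers a = zpowers c} ⊆
      (fun a : ↥Z => (a : M)) '' {a : ↥Z | orderOf a = orderOf c} := by
    intro a ha
    have hmem : a ∈ Z := by rw [hZ, ← ha]; exact mem_zpowers a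
    refine ⟨⟨a, hmem⟩, ?_, rfl⟩
    simp only [Set.mem_setOf_eq, Subgroup.orderOf_mk]
    rw [← Nat.card_zpowers a, ← Nat.card_zpowers c, ha]
  calc {a : M | zpowers a = zpowers c}.ncard
      ≤ ((fun a : ↥Z => (a : M)) '' {a : ↥Z | orderOf a = orderOf c}).ncard :=
        Set.ncard_le_ncard hsub (Set.toFinite _)
    _ = ({a : ↥Z | orderOf a = orderOf c}).ncard :=
        Set.ncard_image_of_injective _ Subtype.val_injective

end Count
open Subgroup Set

section L3
variable {M : Type*} [Group M] [Finite M]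

/-- In a cyclic `p`-group of order `p^n`, the number of elements `b` with
`x ∈ ⟨b⟩` is at least `p^n - p^(j-1)` where `p^j = orderOf x`. -/
lemma ncard_contains_ge [IsCyclic M] {p n j : ℕ} (hp : p.Prime)
    (hM : Nat.card M = p ^ n) {x : M} (hx : orderOf x = p ^ j) (hj : 1 ≤ j) :
    p ^ n - p ^ (j - 1) ≤ {b : M | x ∈ zpowers b}.ncard := by
  classical
  have := Fintype.ofFinite M
  -- the "bad" set is contained in elements killed by p^(j-1)
  have hsub : {b : M | x ∈ zpowers b}ᶜ ⊆ {b : M | b ^ p ^ (j - 1) = 1} := by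
    intro b hb
    simp only [Set.mem_compl_iff, Set.mem_setOf_eq] at hb ⊢
    by_contra hne
    apply hb
    -- b has order p^l with l ≥ j
    obtain ⟨l, _, hl⟩ := (Nat.dvd_prime_pow hp).1 (hM ▸ orderOf_dvd_natCard b)
    have hnd : ¬ orderOf b ∣ p ^ (j - 1) := fun h => hne (orderOf_dvd_iff_pow_eq_one.1 h)
    have hlj : j ≤ l := by
      by_contra hlj
      exact hnd (hl ▸ pow_dvd_pow p (by omega))
    -- c := b ^ p^(l-j) has order p^j
    set c := b ^ p ^ (l - j) with hc
    have hoc : orderOf c = p ^ j := by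
      rw [hc, orderOf_pow, hl, Nat.gcd_eq_right (pow_dvd_pow p (by omega)),
        Nat.pow_div (by omega) hp.pos]
      congr 1; omega
    -- ⟨c⟩ = {t | t ^ p^j = 1} ∋ x
    have hVU : (zpowers c : Set M) ⊆ {t : M | t ^ p ^ j = 1} := by
      intro t ht
      obtain ⟨k, hk⟩ := mem_zpowers_iff_nat.1 ht
      simp only [Set.mem_setOf_eq, ← hk, ← hoc]
      rw [← pow_mul, mul_comm, pow_mul, pow_orderOf_eq_one, one_pow]
    have hUcard : {t : M | t ^ p ^ j = 1}.ncard ≤ p ^ j := by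
      rw [Set.ncard_eq_toFinset_card', Set.toFinset_setOf]
      exact IsCyclic.card_pow_eq_one_le (pow_pos hp.pos j)
    have hVcard : (zpowers c : Set M).ncard = p ^ j := by
      rw [← Nat.card_coe_set_eq]
      simpa using (Nat.card_zpowers c).trans hoc
    have hVeq : (zpowers c : Set M) = {t : M | t ^ p ^ j = 1} :=
      Set.eq_of_subset_of_ncard_le hVU (by omega) (Set.toFinite _)
    have hxV : x ∈ (zpowers c : Set M) := by
      rw [hVeq]
      simp only [Set.mem_setOf_eq, ← hx, pow_orderOf_eq_one]
    exact (zpowers_le.2 (mem_zpowers_iff_nat.2 ⟨p ^ (l - j), rfl⟩) : zpowers c ≤ zpowers b) hxV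
  have hbad : ({b : M | x ∈ zpowers b}ᶜ).ncard ≤ p ^ (j - 1) := by
    refine le_trans (Set.ncard_le_ncard hsub (Set.toFinite _)) ?_
    rw [Set.ncard_eq_toFinset_card', Set.toFinset_setOf]
    exact IsCyclic.card_pow_eq_one_le (pow_pos hp.pos _)
  have htot := Set.ncard_add_ncard_compl {b : M | x ∈ zpowers b}
  rw [hM] at htot
  omega

end L3

lemma poly_key {p r a t b s : ℤ} (hp : 2 ≤ p) (hr : p + 1 ≤ r) (ha : 1 ≤ a)
    (ht : 1 ≤ t) (hb : 1 ≤ b) (hs : 1 ≤ s) :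
    (p*a - a)*(r*b - b) + (p*a*t - a*t)*(r*b*s - 1) + p*a*t
      < (p*a*t - a)*(r*b*s - b) + (p*a)*(r*b) := by
  have hb0 : (0:ℤ) ≤ b := by linarith
  have hrb0 : (0:ℤ) ≤ r*b := by nlinarith
  have h1 : b ≤ r*b*s - p*b := by
    nlinarith [mul_le_mul_of_nonneg_right hr hb0,
      mul_le_mul_of_nonneg_left hs hrb0]
  have ht1 : (0:ℤ) ≤ t - 1 := by linarith
  have h2 : t - 1 ≤ (t - 1) * (r*b*s - p*b) := by
    nlinarith [mul_le_mul_of_nonneg_left h1 ht1]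
  have hrb : 3 ≤ r*b := by nlinarith
  have hexpr : 2 ≤ (t-1)*(r*b*s-p*b) + r*b - t := by linarith
  have h3 : 0 < a*((t-1)*(r*b*s-p*b) + r*b - t) :=
    mul_pos (by linarith) (by linarith)
  have key : (p*a*t - a)*(r*b*s - b) + (p*a)*(r*b)
      - ((p*a-a)*(r*b-b) + (p*a*t-a*t)*(r*b*s-1) + p*a*t)
      = a*((t-1)*(r*b*s-p*b) + r*b - t) := by ring
  linarith

set_option maxHeartbeats 1000000 in
/-- The main numeric inequality, in terms of abstract factors. -/
lemma final_num_core {p r a t b s : ℕ} (hp : 2 ≤ p) (hpr : p < r)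
    (ha : 1 ≤ a) (ht : 1 ≤ t) (hb : 1 ≤ b) (hs : 1 ≤ s)
    {nA nB nC nI ncX ncY : ℕ}
    (hA : nA ≤ a * t * (p-1)) (hB : p*a*t - a ≤ nB)
    (hC : r*b*s - b ≤ nC)
    (hI : nI ≤ (a * (p-1)) * (b * (r-1)))
    (hX : ncX + nI = nB * nC + (p*a) * (r*b))
    (hY : ncY ≤ nA * (r*b*s - 1) + p*a*t) : ncY < ncX := by
  have f1 : a ≤ p*a*t := by
    have := Nat.mul_le_mul (Nat.mul_le_mul (show 1 ≤ p by omega) (le_refl a)) ht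
    simpa using this
  have f2 : b ≤ r*b*s := by
    have := Nat.mul_le_mul (Nat.mul_le_mul (show 1 ≤ r by omega) (le_refl b)) hs
    simpa using this
  have f3 : 1 ≤ r*b*s := by
    have := Nat.mul_le_mul (Nat.mul_le_mul (show 1 ≤ r by omega) hb) hs
    simpa using this
  -- move to ℤ
  have hkey := poly_key (p := p) (r := r) (a := a) (t := t) (b := b) (s := s)
    (by exact_mod_cast hp) (by exact_mod_cast (show p + 1 ≤ r by omega))
    (by exact_mod_cast ha) (by exact_mod_cast ht) (by exact_mod_cast hb)
    (by exact_mod_cast hs)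
  have hA' : (nA:ℤ) ≤ (a:ℤ) * t * ((p:ℤ)-1) := by
    have := (Nat.cast_le (α := ℤ)).2 hA
    push_cast [Nat.cast_sub (show 1 ≤ p by omega)] at this
    exact this
  have hB' : (p:ℤ)*a*t - a ≤ (nB:ℤ) := by
    have := (Nat.cast_le (α := ℤ)).2 hB
    push_cast [Nat.cast_sub f1] at this
    exact this
  have hC' : (r:ℤ)*b*s - b ≤ (nC:ℤ) := by
    have := (Nat.cast_le (α := ℤ)).2 hC
    push_cast [Nat.cast_sub f2] at this
    exact this
  have hI' : (nI:ℤ) ≤ ((a:ℤ) * ((p:ℤ)-1)) * ((b:ℤ) * ((r:ℤ)-1)) := by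
    have := (Nat.cast_le (α := ℤ)).2 hI
    push_cast [Nat.cast_sub (show 1 ≤ p by omega), Nat.cast_sub (show 1 ≤ r by omega)] at this
    exact this
  have hX' : (ncX:ℤ) + nI = (nB:ℤ) * nC + ((p:ℤ)*a) * ((r:ℤ)*b) := by
    exact_mod_cast congrArg (Nat.cast : ℕ → ℤ) hX
  have hY' : (ncY:ℤ) ≤ (nA:ℤ) * ((r:ℤ)*b*s - 1) + (p:ℤ)*a*t := by
    have := (Nat.cast_le (α := ℤ)).2 hY
    push_cast [Nat.cast_sub f3] at this
    exact this
  -- combine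
  have hCnn : (0:ℤ) ≤ (r:ℤ)*b*s - b := by
    have : ((b:ℤ)) ≤ (r:ℤ)*b*s := by exact_mod_cast f2
    linarith
  have hBnn : (0:ℤ) ≤ (nB:ℤ) := by positivity
  have hBC : ((p:ℤ) * a * t - a) * ((r:ℤ) * b * s - b) ≤ (nB : ℤ) * nC :=
    le_trans (mul_le_mul_of_nonneg_right hB' hCnn)
      (mul_le_mul_of_nonneg_left hC' hBnn)
  have hAY : (nA : ℤ) * ((r:ℤ) * b * s - 1) ≤ ((p:ℤ)*a*t - (a:ℤ)*t) * ((r:ℤ)*b*s - 1) := by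
    have h1 : (nA : ℤ) ≤ (p:ℤ)*a*t - (a:ℤ)*t := by
      have : (a:ℤ) * t * ((p:ℤ)-1) = (p:ℤ)*a*t - (a:ℤ)*t := by ring
      linarith
    have hnn : (0:ℤ) ≤ (r:ℤ)*b*s - 1 := by
      have : ((1:ℕ):ℤ) ≤ ((r*b*s : ℕ) : ℤ) := by exact_mod_cast f3
      push_cast at this
      linarith
    exact mul_le_mul_of_nonneg_right h1 hnn
  have hIle : (nI : ℤ) ≤ ((p:ℤ)*a - a) * ((r:ℤ)*b - b) := by
    have : ((a:ℤ) * ((p:ℤ)-1)) * ((b:ℤ) * ((r:ℤ)-1)) = ((p:ℤ)*a - a) * ((r:ℤ)*b - b) := by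
      ring
    linarith
  have : (ncY:ℤ) < (ncX:ℤ) := by linarith
  exact_mod_cast this

set_option maxHeartbeats 1000000 in
/-- The main numeric inequality. -/
lemma final_num {p r : ℕ} (hp : 2 ≤ p) (hpr : p < r) {i i' j m : ℕ}
    (hi' : 1 ≤ i') (hii : i' ≤ i) (hj : 1 ≤ j) (hjm : j ≤ m)
    {nA nB nC nI ncX ncY : ℕ}
    (hA : nA ≤ p ^ (i-1) * (p-1)) (hB : p ^ i - p ^ (i'-1) ≤ nB)
    (hC : r ^ m - r ^ (j-1) ≤ nC)
    (hI : nI ≤ (p ^ (i'-1) * (p-1)) * (r ^ (j-1) * (r-1)))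
    (hX : ncX + nI = nB * nC + p ^ i' * r ^ j)
    (hY : ncY ≤ nA * (r ^ m - 1) + p ^ i) : ncY < ncX := by
  obtain ⟨a, ha_def⟩ : ∃ n, p ^ (i'-1) = n := ⟨_, rfl⟩
  obtain ⟨t, ht_def⟩ : ∃ n, p ^ (i-i') = n := ⟨_, rfl⟩
  obtain ⟨b, hb_def⟩ : ∃ n, r ^ (j-1) = n := ⟨_, rfl⟩
  obtain ⟨s, hs_def⟩ : ∃ n, r ^ (m-j) = n := ⟨_, rfl⟩
  have ha : 1 ≤ a := ha_def ▸ Nat.one_le_pow _ _ (by omega)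
  have ht : 1 ≤ t := ht_def ▸ Nat.one_le_pow _ _ (by omega)
  have hb : 1 ≤ b := hb_def ▸ Nat.one_le_pow _ _ (by omega)
  have hs : 1 ≤ s := hs_def ▸ Nat.one_le_pow _ _ (by omega)
  have e1 : p * a * t = p ^ i := by
    rw [← ha_def, ← ht_def, ← pow_succ', ← pow_add]; congr 1; omega
  have e2 : p * a = p ^ i' := by
    rw [← ha_def, ← pow_succ']; congr 1; omega
  have e3 : a * t = p ^ (i-1) := by
    rw [← ha_def, ← ht_def, ← pow_add]; congr 1; omega
  have e5 : r * b * s = r ^ m := by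
    rw [← hb_def, ← hs_def, ← pow_succ', ← pow_add]; congr 1; omega
  have e6 : r * b = r ^ j := by
    rw [← hb_def, ← pow_succ']; congr 1; omega
  rw [← e3] at hA
  rw [← e1, ha_def] at hB
  rw [← e5, hb_def] at hC
  rw [ha_def, hb_def] at hI
  rw [← e2, ← e6] at hX
  rw [← e5, ← e1] at hY
  exact final_num_core hp hpr ha ht hb hs hA hB hC hI hX hY

open Subgroup

section Graph
variable {G : Type*} [Group G]

/-- closed neighbourhood in the power graph -/
def nbhdC (v : G) : Set G := {z | z ∈ zpowers v ∨ v ∈ zpowers z}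

lemma self_mem_nbhdC (v : G) : v ∈ nbhdC v := Or.inl (mem_zpowers v)

variable [Fintype G]

lemma powerGraph_adj_iff {v z : G} :
    (powerGraph G).Adj v z ↔ v ≠ z ∧ (v ∈ zpowers z ∨ z ∈ zpowers v) := by
  show (v ≠ z ∧ _) ↔ _
  rw [mem_zpowers_iff_pos (x := z) (y := v), mem_zpowers_iff_pos (x := v) (y := z)]

lemma nbhdC_eq_insert (v : G) :
    nbhdC v = insert v ((powerGraph G).neighborSet v) := by
  ext z
  simp only [nbhdC, Set.mem_setOf_eq, Set.mem_insert_iff, SimpleGraph.mem_neighborSet,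
    powerGraph_adj_iff]
  by_cases hz : z = v
  · subst hz; simp [mem_zpowers]
  · constructor
    · rintro (h | h)
      · exact Or.inr ⟨Ne.symm hz, Or.inr h⟩
      · exact Or.inr ⟨Ne.symm hz, Or.inl h⟩
    · rintro (rfl | ⟨-, (h | h)⟩)
      · exact Or.inl (mem_zpowers _)
      · exact Or.inr h
      · exact Or.inl h

lemma degree_add_one_eq (v : G) :
    (powerGraph G).degree v + 1 = (nbhdC v).ncard := by
  rw [nbhdC_eq_insert, Set.ncard_insert_of_notMem (by simp) (Set.toFinite _)]
  congr 1
  rw [Set.ncard_eq_toFinset_card']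
  classical
  rw [← SimpleGraph.card_neighborSet_eq_degree]
  rw [Set.toFinset_card]

end Graph

section Transport
variable {H G : Type*} [Group H] [Group G]

lemma mem_zpowers_mulEquiv (e : H ≃* G) {u v : H} :
    u ∈ zpowers v ↔ e u ∈ zpowers (e v) := by
  constructor
  · rintro ⟨k, rfl⟩; exact ⟨k, (map_zpow e v k).symm⟩
  · rintro ⟨k, hk⟩
    exact ⟨k, e.injective (by rw [map_zpow]; exact hk)⟩

lemma image_nbhdC (e : H ≃* G) (v : H) : e '' nbhdC v = nbhdC (e v) := by
  ext z
  constructor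
  · rintro ⟨w, hw, rfl⟩
    rcases hw with h | h
    · exact Or.inl ((mem_zpowers_mulEquiv e).1 h)
    · exact Or.inr ((mem_zpowers_mulEquiv e).1 h)
  · intro hz
    refine ⟨e.symm z, ?_, by simp⟩
    have hz' : z = e (e.symm z) := by simp
    rcases hz with h | h
    · exact Or.inl ((mem_zpowers_mulEquiv e).2 (by rw [← hz']; exact h))
    · exact Or.inr ((mem_zpowers_mulEquiv e).2 (by rw [← hz']; exact h))

lemma ncard_nbhdC_mulEquiv (e : H ≃* G) (v : H) :
    (nbhdC (e v)).ncard = (nbhdC v).ncard := by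
  rw [← image_nbhdC, Set.ncard_image_of_injective _ e.injective]

end Transport

set_option maxHeartbeats 1000000 in
/-- Core comparison: in `H × K` the closed neighbourhood of `(y₁, 1)` is smaller than
that of `(x₁, x₂)`. -/
lemma prod_ncard_lt {H K : Type*} [Group H] [Group K] [Finite H] [Finite K]
    {p r αq : ℕ} (hp : p.Prime) (hr : r.Prime) (hlt : p < r)
    (hKcy : IsCyclic K) (hKcard : Nat.card K = r ^ αq)
    (hcop : ∀ (a : H) (b : K), Nat.Coprime (orderOf a) (orderOf b))
    (y₁ x₁ : H) (x₂ : K)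
    (hmax₁ : ∀ c : H, y₁ ∈ Subgroup.zpowers c → Subgroup.zpowers c = Subgroup.zpowers y₁)
    (hx₁ : x₁ ∈ Subgroup.zpowers y₁)
    {i i' j : ℕ} (hiord : orderOf y₁ = p ^ i) (hi1 : 1 ≤ i)
    (hi'ord : orderOf x₁ = p ^ i') (hi'1 : 1 ≤ i')
    (hjord : orderOf x₂ = r ^ j) (hj1 : 1 ≤ j) (hjα : j ≤ αq) :
    (nbhdC (y₁, (1 : K))).ncard < (nbhdC (x₁, x₂)).ncard := by
  classical
  haveI := hKcy
  have hi'i : i' ≤ i := by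
    obtain ⟨k, hk⟩ := mem_zpowers_iff_nat.1 hx₁
    have hdvd : orderOf x₁ ∣ orderOf y₁ := hk ▸ orderOf_pow_dvd k
    rw [hi'ord, hiord] at hdvd
    exact (Nat.pow_dvd_pow_iff_le_right hp.one_lt).1 hdvd
  -- cardinalities of the cyclic pieces
  have hZy : (Subgroup.zpowers y₁ : Set H).ncard = p ^ i := by
    rw [← Nat.card_coe_set_eq]
    simpa using (Nat.card_zpowers y₁).trans hiord
  have hZx₁ : (Subgroup.zpowers x₁ : Set H).ncard = p ^ i' := by
    rw [← Nat.card_coe_set_eq]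
    simpa using (Nat.card_zpowers x₁).trans hi'ord
  have hZx₂ : (Subgroup.zpowers x₂ : Set K).ncard = r ^ j := by
    rw [← Nat.card_coe_set_eq]
    simpa using (Nat.card_zpowers x₂).trans hjord
  have hAZy : {a : H | y₁ ∈ Subgroup.zpowers a} ⊆ (Subgroup.zpowers y₁ : Set H) := by
    intro a ha
    have h0 := hmax₁ a ha
    rw [← h0]
    exact Subgroup.mem_zpowers a
  have hAle : {a : H | y₁ ∈ Subgroup.zpowers a}.ncard ≤ p ^ (i - 1) * (p - 1) := by
    have hsub : {a : H | y₁ ∈ Subgroup.zpowers a} ⊆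
        {a : H | Subgroup.zpowers a = Subgroup.zpowers y₁} := fun a ha => hmax₁ a ha
    refine le_trans (Set.ncard_le_ncard hsub (Set.toFinite _)) (le_trans (ncard_gen_le y₁) ?_)
    rw [hiord, Nat.totient_prime_pow hp (by omega)]
  have hBge : p ^ i - p ^ (i' - 1) ≤ {a : H | x₁ ∈ Subgroup.zpowers a}.ncard := by
    haveI : IsCyclic ↥(Subgroup.zpowers y₁) := isCyclic_zpowers' y₁
    have hZcard : Nat.card ↥(Subgroup.zpowers y₁) = p ^ i := by
      rw [Nat.card_zpowers, hiord]
    have hordx' : orderOf (⟨x₁, hx₁⟩ : ↥(Subgroup.zpowers y₁)) = p ^ i' := by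
      rw [Subgroup.orderOf_mk, hi'ord]
    have hS := ncard_contains_ge hp hZcard hordx' hi'1
    have himg : (fun m : ↥(Subgroup.zpowers y₁) => (m : H)) ''
        {m | (⟨x₁, hx₁⟩ : ↥(Subgroup.zpowers y₁)) ∈ Subgroup.zpowers m}
        ⊆ {a : H | x₁ ∈ Subgroup.zpowers a} := by
      rintro a ⟨m, hm, rfl⟩
      obtain ⟨k, hk⟩ := mem_zpowers_iff_nat.1 hm
      refine mem_zpowers_iff_nat.2 ⟨k, ?_⟩
      have h0 := congrArg (fun z : ↥(Subgroup.zpowers y₁) => (z : H)) hk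
      simpa using h0
    calc p ^ i - p ^ (i' - 1)
        ≤ {m | (⟨x₁, hx₁⟩ : ↥(Subgroup.zpowers y₁)) ∈ Subgroup.zpowers m}.ncard := hS
      _ = ((fun m : ↥(Subgroup.zpowers y₁) => (m : H)) ''
            {m | (⟨x₁, hx₁⟩ : ↥(Subgroup.zpowers y₁)) ∈ Subgroup.zpowers m}).ncard :=
          (Set.ncard_image_of_injective _ Subtype.val_injective).symm
      _ ≤ _ := Set.ncard_le_ncard himg (Set.toFinite _)
  have hCge : r ^ αq - r ^ (j - 1) ≤ {b : K | x₂ ∈ Subgroup.zpowers b}.ncard :=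
    ncard_contains_ge hr hKcard hjord hj1
  have hIB : ({a : H | x₁ ∈ Subgroup.zpowers a} ∩ (Subgroup.zpowers x₁ : Set H)).ncard
      ≤ p ^ (i' - 1) * (p - 1) := by
    have hsub : {a : H | x₁ ∈ Subgroup.zpowers a} ∩ (Subgroup.zpowers x₁ : Set H) ⊆
        {a : H | Subgroup.zpowers a = Subgroup.zpowers x₁} := by
      rintro a ⟨haB, haZ⟩
      exact le_antisymm (Subgroup.zpowers_le.2 haZ) (Subgroup.zpowers_le.2 haB)
    refine le_trans (Set.ncard_le_ncard hsub (Set.toFinite _)) (le_trans (ncard_gen_le x₁) ?_)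
    rw [hi'ord, Nat.totient_prime_pow hp (by omega)]
  have hIC : ({b : K | x₂ ∈ Subgroup.zpowers b} ∩ (Subgroup.zpowers x₂ : Set K)).ncard
      ≤ r ^ (j - 1) * (r - 1) := by
    have hsub : {b : K | x₂ ∈ Subgroup.zpowers b} ∩ (Subgroup.zpowers x₂ : Set K) ⊆
        {b : K | Subgroup.zpowers b = Subgroup.zpowers x₂} := by
      rintro b ⟨hbC, hbZ⟩
      exact le_antisymm (Subgroup.zpowers_le.2 hbZ) (Subgroup.zpowers_le.2 hbC)
    refine le_trans (Set.ncard_le_ncard hsub (Set.toFinite _)) (le_trans (ncard_gen_le x₂) ?_)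
    rw [hjord, Nat.totient_prime_pow hr (by omega)]
  -- the closed neighbourhood of (x₁, x₂)
  have hsetX : nbhdC (x₁, x₂) =
      ({a : H | x₁ ∈ Subgroup.zpowers a} ×ˢ {b : K | x₂ ∈ Subgroup.zpowers b})
        ∪ ((Subgroup.zpowers x₁ : Set H) ×ˢ (Subgroup.zpowers x₂ : Set K)) := by
    ext ⟨a, b⟩
    simp only [nbhdC, Set.mem_setOf_eq, Set.mem_union, Set.mem_prod]
    constructor
    · rintro (h | h)
      · exact Or.inr ((prod_mem_zpowers_iff (hcop x₁ x₂)).1 h)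
      · exact Or.inl ((prod_mem_zpowers_iff (hcop a b)).1 h)
    · rintro (h | h)
      · exact Or.inr ((prod_mem_zpowers_iff (hcop a b)).2 h)
      · exact Or.inl ((prod_mem_zpowers_iff (hcop x₁ x₂)).2 h)
  have hXeq : (nbhdC (x₁, x₂)).ncard
      + (({a : H | x₁ ∈ Subgroup.zpowers a} ∩ (Subgroup.zpowers x₁ : Set H)) ×ˢ
          ({b : K | x₂ ∈ Subgroup.zpowers b} ∩ (Subgroup.zpowers x₂ : Set K))).ncard
      = {a : H | x₁ ∈ Subgroup.zpowers a}.ncard * {b : K | x₂ ∈ Subgroup.zpowers b}.ncard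
        + p ^ i' * r ^ j := by
    have h0 := Set.ncard_union_add_ncard_inter
      ({a : H | x₁ ∈ Subgroup.zpowers a} ×ˢ {b : K | x₂ ∈ Subgroup.zpowers b})
      ((Subgroup.zpowers x₁ : Set H) ×ˢ (Subgroup.zpowers x₂ : Set K))
      (Set.toFinite _) (Set.toFinite _)
    rw [Set.prod_inter_prod] at h0
    rw [hsetX, h0, ncard_prod', ncard_prod', hZx₁, hZx₂]
  -- the closed neighbourhood of (y₁, 1)
  have hsetY : nbhdC (y₁, (1 : K)) ⊆
      ({a : H | y₁ ∈ Subgroup.zpowers a} ×ˢ (Set.univ : Set K))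
        ∪ (((Subgroup.zpowers y₁ : Set H) \ {a : H | y₁ ∈ Subgroup.zpowers a}) ×ˢ
            ({1} : Set K)) := by
    rintro ⟨a, b⟩ h
    simp only [nbhdC, Set.mem_setOf_eq] at h
    rcases h with h | h
    · obtain ⟨ha, hb⟩ := (prod_mem_zpowers_iff (hcop y₁ 1)).1 h
      rw [Subgroup.zpowers_one_eq_bot, Subgroup.mem_bot] at hb
      by_cases hA : a ∈ {a : H | y₁ ∈ Subgroup.zpowers a}
      · exact Or.inl (Set.mk_mem_prod hA (Set.mem_univ b))
      · exact Or.inr (Set.mk_mem_prod ⟨ha, hA⟩ (by simp [hb]))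
    · obtain ⟨ha, -⟩ := (prod_mem_zpowers_iff (hcop a b)).1 h
      exact Or.inl (Set.mk_mem_prod ha (Set.mem_univ b))
  have hYle : (nbhdC (y₁, (1 : K))).ncard
      ≤ {a : H | y₁ ∈ Subgroup.zpowers a}.ncard * (r ^ αq - 1) + p ^ i := by
    have h1 := le_trans (Set.ncard_le_ncard hsetY (Set.toFinite _))
      (Set.ncard_union_le _ _)
    rw [ncard_prod', ncard_prod', Set.ncard_univ, hKcard, Set.ncard_singleton, mul_one,
      Set.ncard_diff hAZy, hZy] at h1
    have h4 : {a : H | y₁ ∈ Subgroup.zpowers a}.ncard ≤ p ^ i := by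
      rw [← hZy]; exact Set.ncard_le_ncard hAZy (Set.toFinite _)
    have h5 : 1 ≤ r ^ αq := Nat.one_le_pow _ _ hr.pos
    have h6 : {a : H | y₁ ∈ Subgroup.zpowers a}.ncard * (r ^ αq)
        = {a : H | y₁ ∈ Subgroup.zpowers a}.ncard * (r ^ αq - 1)
          + {a : H | y₁ ∈ Subgroup.zpowers a}.ncard := by
      have h7 : r ^ αq - 1 + 1 = r ^ αq := by omega
      rw [← h7, Nat.mul_add, mul_one, h7]
    omega
  have hI' : (({a : H | x₁ ∈ Subgroup.zpowers a} ∩ (Subgroup.zpowers x₁ : Set H)) ×ˢ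
      ({b : K | x₂ ∈ Subgroup.zpowers b} ∩ (Subgroup.zpowers x₂ : Set K))).ncard
      ≤ (p ^ (i' - 1) * (p - 1)) * (r ^ (j - 1) * (r - 1)) := by
    rw [ncard_prod']
    exact Nat.mul_le_mul hIB hIC
  exact final_num hp.two_le hlt hi'1 hi'i hj1 hjα hAle hBge hCge hI' hXeq hYle

open Subgroup

section Decomp
variable {G : Type*} [Group G] [Fintype G]

/-- A subgroup whose cardinality is the full `p`-part of `|G|` in a nilpotent group
is normal. -/
lemma normal_of_sylow_card (hnil : Group.IsNilpotent G) {p α : ℕ} (hp : p.Prime)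
    (P : Subgroup G) (hP : Nat.card ↥P = p ^ α)
    (hfac : (Nat.card G).factorization p = α) : P.Normal := by
  haveI : Fact p.Prime := ⟨hp⟩
  set S : Sylow p G := Sylow.ofCard P (by rw [hP, hfac])
  have hS : (S : Subgroup G) = P := Sylow.coe_ofCard P _
  have hnorm : S.Normal :=
    Sylow.normal_of_normalizerCondition (normalizerCondition_of_isNilpotent) S
  rwa [hS] at hnorm

lemma disjoint_of_coprime_card {P₁ P₂ : Subgroup G}
    (h : Nat.Coprime (Nat.card ↥P₁) (Nat.card ↥P₂)) : Disjoint P₁ P₂ := by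
  rw [Subgroup.disjoint_def]
  intro x hx1 hx2
  have h1 : orderOf x ∣ Nat.card ↥P₁ := by
    have := orderOf_dvd_natCard (⟨x, hx1⟩ : ↥P₁)
    rwa [Subgroup.orderOf_mk] at this
  have h2 : orderOf x ∣ Nat.card ↥P₂ := by
    have := orderOf_dvd_natCard (⟨x, hx2⟩ : ↥P₂)
    rwa [Subgroup.orderOf_mk] at this
  have : orderOf x = 1 := Nat.eq_one_of_dvd_coprimes h h1 h2
  exact orderOf_eq_one_iff.1 this

end Decomp
open Subgroup

set_option linter.unusedSectionVars false

section Iso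
variable {G : Type*} [Group G] [Fintype G]

lemma mul_iso (P₁ P₂ : Subgroup G) (h1 : P₁.Normal) (h2 : P₂.Normal)
    (hdis : Disjoint P₁ P₂) (hcard : Nat.card ↥P₁ * Nat.card ↥P₂ = Nat.card G) :
    ∃ e : (↥P₁ × ↥P₂) ≃* G, ∀ (a : ↥P₁) (b : ↥P₂), e (a, b) = (a : G) * (b : G) := by
  have hcomm : ∀ (m : ↥P₁) (n : ↥P₂), Commute (P₁.subtype m) (P₂.subtype n) := fun m n =>
    Subgroup.commute_of_normal_of_disjoint P₁ P₂ h1 h2 hdis _ _ m.2 n.2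
  set f : ↥P₁ × ↥P₂ →* G := MonoidHom.noncommCoprod P₁.subtype P₂.subtype hcomm
  have hinj : Function.Injective f := by
    rw [injective_iff_map_eq_one]
    rintro ⟨a, b⟩ hab
    have : (a : G) * b = 1 := hab
    have ha : (a : G) = (b : G)⁻¹ := eq_inv_of_mul_eq_one_left this
    have hmem : (a : G) ∈ P₂ := ha ▸ P₂.inv_mem b.2
    have ha1 : (a : G) = 1 := by
      have := Subgroup.disjoint_def.1 hdis a.2 hmem
      exact this
    have hb1 : (b : G) = 1 := by
      rw [ha1] at this; simpa using this
    exact Prod.ext (Subtype.ext ha1) (Subtype.ext hb1)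
  have hbij : Function.Bijective f := by
    rw [Nat.bijective_iff_injective_and_card]
    exact ⟨hinj, by rw [Nat.card_prod]; exact hcard⟩
  exact ⟨MulEquiv.ofBijective f hbij, fun a b => rfl⟩

end Iso

/-- If `⟨y⟩` is a maximal cyclic subgroup of `G` with Sylow decomposition `y = y₁ y₂`,
where `P₁` is noncyclic and `P₂` is cyclic, then every `x ∈ ⟨y⟩` with both Sylow
components nonidentity satisfies `deg(x) > deg(y₁)`; in particular `deg(y) > deg(y₁)`. -/
theorem degree_gt_degree_first_component
    {G : Type*} [Group G] [Fintype G] (hnil : Group.IsNilpotent G)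
    (p₁ p₂ α₁ α₂ : ℕ) (hp₁ : p₁.Prime) (hp₂ : p₂.Prime) (hlt : p₁ < p₂)
    (hα₁ : 1 ≤ α₁) (hα₂ : 1 ≤ α₂)
    (P₁ P₂ : Subgroup G)
    (hcard : Fintype.card G = p₁ ^ α₁ * p₂ ^ α₂)
    (hP₁ : Nat.card ↥P₁ = p₁ ^ α₁) (hP₂ : Nat.card ↥P₂ = p₂ ^ α₂)
    (hP₁nc : ¬ IsCyclic ↥P₁) (hP₂c : IsCyclic ↥P₂)
    (y y₁ y₂ : G) (hy₁ : y₁ ∈ P₁) (hy₂ : y₂ ∈ P₂) (hy : y = y₁ * y₂)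
    (hmax : IsMaximalCyclic (Subgroup.zpowers y)) :
    (∀ x ∈ Subgroup.zpowers y, p₁ ∣ orderOf x → p₂ ∣ orderOf x →
        (powerGraph G).degree y₁ < (powerGraph G).degree x) ∧
      (powerGraph G).degree y₁ < (powerGraph G).degree y := by
  classical
  have hne : p₁ ≠ p₂ := Nat.ne_of_lt hlt
  have hcopp : Nat.Coprime p₁ p₂ := (Nat.coprime_primes hp₁ hp₂).2 hne
  have hcoppow : Nat.Coprime (p₁ ^ α₁) (p₂ ^ α₂) := Nat.Coprime.pow α₁ α₂ hcopp
  have hGcard : Nat.card G = p₁ ^ α₁ * p₂ ^ α₂ := by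
    rw [Nat.card_eq_fintype_card, hcard]
  have hfac1 : (Nat.card G).factorization p₁ = α₁ := by
    rw [hGcard, Nat.factorization_mul (pow_ne_zero _ hp₁.pos.ne') (pow_ne_zero _ hp₂.pos.ne')]
    simp [Nat.Prime.factorization_pow hp₁, Nat.Prime.factorization_pow hp₂,
      Finsupp.single_apply, hne, hne.symm]
  have hfac2 : (Nat.card G).factorization p₂ = α₂ := by
    rw [hGcard, Nat.factorization_mul (pow_ne_zero _ hp₁.pos.ne') (pow_ne_zero _ hp₂.pos.ne')]
    simp [Nat.Prime.factorization_pow hp₁, Nat.Prime.factorization_pow hp₂,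
      Finsupp.single_apply, hne, hne.symm]
  have hn1 : P₁.Normal := normal_of_sylow_card hnil hp₁ P₁ hP₁ hfac1
  have hn2 : P₂.Normal := normal_of_sylow_card hnil hp₂ P₂ hP₂ hfac2
  have hdisj : Disjoint P₁ P₂ :=
    disjoint_of_coprime_card (by rw [hP₁, hP₂]; exact hcoppow)
  obtain ⟨e, he⟩ := mul_iso P₁ P₂ hn1 hn2 hdisj (by rw [hP₁, hP₂, hGcard])
  have hordH : ∀ a : ↥P₁, ∃ n, n ≤ α₁ ∧ orderOf a = p₁ ^ n := fun a =>
    (Nat.dvd_prime_pow hp₁).1 (hP₁ ▸ orderOf_dvd_natCard a)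
  have hordK : ∀ b : ↥P₂, ∃ n, n ≤ α₂ ∧ orderOf b = p₂ ^ n := fun b =>
    (Nat.dvd_prime_pow hp₂).1 (hP₂ ▸ orderOf_dvd_natCard b)
  have hcop : ∀ (a : ↥P₁) (b : ↥P₂), Nat.Coprime (orderOf a) (orderOf b) := fun a b =>
    Nat.Coprime.coprime_dvd_left (hP₁ ▸ orderOf_dvd_natCard a)
      (Nat.Coprime.coprime_dvd_right (hP₂ ▸ orderOf_dvd_natCard b) hcoppow)
  have hey : e (⟨y₁, hy₁⟩, ⟨y₂, hy₂⟩) = y := by rw [he]; exact hy.symm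
  have heys : e.symm y = (⟨y₁, hy₁⟩, ⟨y₂, hy₂⟩) := by rw [← hey, MulEquiv.symm_apply_apply]
  -- maximality transferred to the first component
  have hmax₁ : ∀ c : ↥P₁, (⟨y₁, hy₁⟩ : ↥P₁) ∈ Subgroup.zpowers c →
      Subgroup.zpowers c = Subgroup.zpowers (⟨y₁, hy₁⟩ : ↥P₁) := by
    intro c hc
    have hmem : y ∈ Subgroup.zpowers (e (c, ⟨y₂, hy₂⟩)) := by
      rw [← hey]
      exact (mem_zpowers_mulEquiv e).1
        ((prod_mem_zpowers_iff (hcop c ⟨y₂, hy₂⟩)).2 ⟨hc, Subgroup.mem_zpowers _⟩)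
    have heq : Subgroup.zpowers y = Subgroup.zpowers (e (c, ⟨y₂, hy₂⟩)) :=
      hmax.2 _ (isCyclic_zpowers' _) (Subgroup.zpowers_le.2 hmem)
    have h2 : (c, (⟨y₂, hy₂⟩ : ↥P₂)) ∈ Subgroup.zpowers ((⟨y₁, hy₁⟩ : ↥P₁), (⟨y₂, hy₂⟩ : ↥P₂)) := by
      have h0 : e (c, ⟨y₂, hy₂⟩) ∈ Subgroup.zpowers y := heq ▸ Subgroup.mem_zpowers _
      rw [← hey] at h0
      exact (mem_zpowers_mulEquiv e).2 h0
    have h3 := ((prod_mem_zpowers_iff (hcop ⟨y₁, hy₁⟩ ⟨y₂, hy₂⟩)).1 h2).1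
    exact le_antisymm (Subgroup.zpowers_le.2 h3) (Subgroup.zpowers_le.2 hc)
  -- maximality transferred to the second component
  have hmax₂ : ∀ d : ↥P₂, (⟨y₂, hy₂⟩ : ↥P₂) ∈ Subgroup.zpowers d →
      Subgroup.zpowers d = Subgroup.zpowers (⟨y₂, hy₂⟩ : ↥P₂) := by
    intro d hd
    have hmem : y ∈ Subgroup.zpowers (e (⟨y₁, hy₁⟩, d)) := by
      rw [← hey]
      exact (mem_zpowers_mulEquiv e).1
        ((prod_mem_zpowers_iff (hcop ⟨y₁, hy₁⟩ d)).2 ⟨Subgroup.mem_zpowers _, hd⟩)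
    have heq : Subgroup.zpowers y = Subgroup.zpowers (e (⟨y₁, hy₁⟩, d)) :=
      hmax.2 _ (isCyclic_zpowers' _) (Subgroup.zpowers_le.2 hmem)
    have h2 : ((⟨y₁, hy₁⟩ : ↥P₁), d) ∈ Subgroup.zpowers ((⟨y₁, hy₁⟩ : ↥P₁), (⟨y₂, hy₂⟩ : ↥P₂)) := by
      have h0 : e (⟨y₁, hy₁⟩, d) ∈ Subgroup.zpowers y := heq ▸ Subgroup.mem_zpowers _
      rw [← hey] at h0
      exact (mem_zpowers_mulEquiv e).2 h0
    have h3 := ((prod_mem_zpowers_iff (hcop ⟨y₁, hy₁⟩ ⟨y₂, hy₂⟩)).1 h2).2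
    exact le_antisymm (Subgroup.zpowers_le.2 h3) (Subgroup.zpowers_le.2 hd)
  -- the first component of y is nontrivial
  haveI : Fact p₁.Prime := ⟨hp₁⟩
  haveI : Fintype ↥P₁ := Fintype.ofFinite _
  have hy₁ne : (⟨y₁, hy₁⟩ : ↥P₁) ≠ 1 := by
    intro h1
    have hp₁dvd : p₁ ∣ Fintype.card ↥P₁ := by
      rw [← Nat.card_eq_fintype_card, hP₁]
      exact dvd_pow_self p₁ (by omega)
    obtain ⟨h, hh⟩ := exists_prime_orderOf_dvd_card p₁ hp₁dvd
    have hzp := hmax₁ h (by rw [h1]; exact Subgroup.one_mem _)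
    have hh1 : h = 1 := by
      have hmem : h ∈ Subgroup.zpowers (⟨y₁, hy₁⟩ : ↥P₁) := hzp ▸ Subgroup.mem_zpowers h
      rw [h1, Subgroup.zpowers_one_eq_bot, Subgroup.mem_bot] at hmem
      exact hmem
    rw [hh1, orderOf_one] at hh
    exact hp₁.one_lt.ne' hh.symm
  obtain ⟨i, hiα, hiord⟩ := hordH ⟨y₁, hy₁⟩
  have hi1 : 1 ≤ i := by
    rcases Nat.eq_zero_or_pos i with rfl | h
    · exfalso; apply hy₁ne; rw [pow_zero] at hiord; exact orderOf_eq_one_iff.1 hiord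
    · exact h
  haveI := hP₂c
  obtain ⟨g, hg⟩ := IsCyclic.exists_generator (α := ↥P₂)
  have hgy : Subgroup.zpowers g = Subgroup.zpowers (⟨y₂, hy₂⟩ : ↥P₂) := hmax₂ g (hg _)
  have hordy₂ : orderOf (⟨y₂, hy₂⟩ : ↥P₂) = p₂ ^ α₂ := by
    rw [← Nat.card_zpowers, ← hgy, Nat.card_zpowers,
      orderOf_eq_card_of_forall_mem_zpowers hg, hP₂]
  have hordy : orderOf y = p₁ ^ i * p₂ ^ α₂ := by
    have h0 : orderOf (e (⟨y₁, hy₁⟩, ⟨y₂, hy₂⟩)) = orderOf ((⟨y₁, hy₁⟩, ⟨y₂, hy₂⟩) : ↥P₁ × ↥P₂) :=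
      orderOf_injective e.toMonoidHom e.injective _
    rw [← hey, h0, Prod.orderOf_mk, Nat.Coprime.lcm_eq_mul (hcop _ _), hiord, hordy₂]
  -- the main claim
  have main : ∀ x ∈ Subgroup.zpowers y, p₁ ∣ orderOf x → p₂ ∣ orderOf x →
      (powerGraph G).degree y₁ < (powerGraph G).degree x := by
    intro x hx hxp₁ hxp₂
    have hex : e ((e.symm x).1, (e.symm x).2) = x := by
      rw [Prod.mk.eta, MulEquiv.apply_symm_apply]
    have hxw : ((e.symm x).1, (e.symm x).2) ∈
        Subgroup.zpowers ((⟨y₁, hy₁⟩ : ↥P₁), (⟨y₂, hy₂⟩ : ↥P₂)) := by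
      rw [← heys, Prod.mk.eta]
      exact (mem_zpowers_mulEquiv e.symm).1 hx
    have hx₁y : (e.symm x).1 ∈ Subgroup.zpowers (⟨y₁, hy₁⟩ : ↥P₁) :=
      ((prod_mem_zpowers_iff (hcop _ _)).1 hxw).1
    have hx₂y : (e.symm x).2 ∈ Subgroup.zpowers (⟨y₂, hy₂⟩ : ↥P₂) :=
      ((prod_mem_zpowers_iff (hcop _ _)).1 hxw).2
    have hordx : orderOf x = orderOf (e.symm x).1 * orderOf (e.symm x).2 := by
      have h0 : orderOf (e ((e.symm x).1, (e.symm x).2))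
          = orderOf (((e.symm x).1, (e.symm x).2) : ↥P₁ × ↥P₂) :=
        orderOf_injective e.toMonoidHom e.injective _
      conv_lhs => rw [← hex]
      rw [h0, Prod.orderOf_mk, Nat.Coprime.lcm_eq_mul (hcop _ _)]
    obtain ⟨i', hi'α, hi'ord⟩ := hordH (e.symm x).1
    obtain ⟨j, hjα, hjord⟩ := hordK (e.symm x).2
    have hi'1 : 1 ≤ i' := by
      by_contra hcon
      have hi'0 : i' = 0 := by omega
      have h0 : orderOf x = orderOf (e.symm x).2 := by
        rw [hordx, hi'ord, hi'0, pow_zero, one_mul]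
      have hdvd : p₁ ∣ p₂ ^ α₂ := dvd_trans (h0 ▸ hxp₁) (hjord ▸ pow_dvd_pow p₂ hjα)
      exact hp₁.one_lt.ne' ((Nat.Coprime.pow_right α₂ hcopp).eq_one_of_dvd hdvd)
    have hj1 : 1 ≤ j := by
      by_contra hcon
      have hj0 : j = 0 := by omega
      have h0 : orderOf x = orderOf (e.symm x).1 := by
        rw [hordx, hjord, hj0, pow_zero, mul_one]
      have hdvd : p₂ ∣ p₁ ^ α₁ := dvd_trans (h0 ▸ hxp₂) (hi'ord ▸ pow_dvd_pow p₁ hi'α)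
      exact hp₂.one_lt.ne' ((Nat.Coprime.pow_right α₁ hcopp.symm).eq_one_of_dvd hdvd)
    have hkey := prod_ncard_lt hp₁ hp₂ hlt hP₂c hP₂ hcop ⟨y₁, hy₁⟩ (e.symm x).1 (e.symm x).2
      hmax₁ hx₁y hiord hi1 hi'ord hi'1 hjord hj1 hjα
    have hdegy₁ : (powerGraph G).degree y₁ + 1
        = (nbhdC ((⟨y₁, hy₁⟩ : ↥P₁), (1 : ↥P₂))).ncard := by
      have h1 : e (⟨y₁, hy₁⟩, (1 : ↥P₂)) = y₁ := by rw [he]; simp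
      rw [degree_add_one_eq, ← ncard_nbhdC_mulEquiv e (⟨y₁, hy₁⟩, (1 : ↥P₂)), h1]
    have hdegx : (powerGraph G).degree x + 1 = (nbhdC ((e.symm x).1, (e.symm x).2)).ncard := by
      rw [degree_add_one_eq]
      conv_lhs => rw [← hex]
      rw [ncard_nbhdC_mulEquiv]
    omega
  refine ⟨main, main y (Subgroup.mem_zpowers y) ?_ ?_⟩
  · rw [hordy]
    exact dvd_mul_of_dvd_left (dvd_pow_self p₁ (by omega)) _
  · rw [hordy]
    exact dvd_mul_of_dvd_right (dvd_pow_self p₂ (by omega)) _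
end
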